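/- arXiv:1807.03638 — 2 statements merged into one kernel-verified Lean document; each statement's English description precedes it below -/
import Mathlib

section
/- Let (R, α) be a multiplicative Hom-Lie conformal superalgebra and Der(R) = ⊕_{k≥0} Der_{α^k}(R) the space of all α^k-derivations, equipped with ∂ acting by (∂D)_λ = −λD_λ, the commutator [D_λ D']_μ(a) = D_λ(D'_{μ−λ}(a)) − (−1)^{|D||D'|} D'_{μ−λ}(D_λ(a)), and the twist α'(D) = D ∘ α. Then (Der(R), α') is a Hom-Lie conformal superalgebra. -/
noncomputable section

namespace HLCS

open scoped BigOperators

/-- Evaluation at `l : ℂ` of a polynomial (in `λ`) with coefficients in `M`,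
encoded as a finitely supported family of coefficients. -/
def pev {M : Type} [AddCommGroup M] [Module ℂ M] (l : ℂ) (p : ℕ →₀ M) : M :=
  p.sum fun n r => l ^ n • r

/-- Evaluation of a polynomial with coefficients in `M` at an operator `T`
(used for substitutions such as `-λ - ∂`). -/
def pevOp {M : Type} [AddCommGroup M] [Module ℂ M] (T : Module.End ℂ M) (p : ℕ →₀ M) : M :=
  p.sum fun n r => (T ^ n) r

/-- The super sign `(-1)^{|a||b|}` attached to parities `i`, `j`. -/
def sg (i j : ZMod 2) : ℂ := (-1 : ℂ) ^ (i * j).val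

/-- The data of a `ℤ₂`-graded `ℂ[∂]`-module `R` with an endomorphism `α` and a
`ℂ`-bilinear `λ`-bracket with values in `ℂ[λ] ⊗ R` (encoded by its coefficients). -/
structure Data (R : Type) [AddCommGroup R] [Module ℂ R] where
  der : Module.End ℂ R
  alpha : Module.End ℂ R
  G : ZMod 2 → Submodule ℂ R
  br : R →ₗ[ℂ] R →ₗ[ℂ] (ℕ →₀ R)

namespace Data

variable {R : Type} [AddCommGroup R] [Module ℂ R] (S : Data R)

/-- `[a_λ b]` evaluated at `λ = l`. -/
def lb (l : ℂ) (a b : R) : R := pev l (S.br a b)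

/-- `[a_{-l-∂} b]` : the bracket with `-l - ∂` substituted for `λ`. -/
def lbOp (l : ℂ) (a b : R) : R :=
  pevOp ((-l) • (1 : Module.End ℂ R) - S.der) (S.br a b)

/-- Multiplicativity: `α [a_λ b] = [α(a)_λ α(b)]`. -/
def Mult : Prop := ∀ (l : ℂ) (a b : R), S.alpha (S.lb l a b) = S.lb l (S.alpha a) (S.alpha b)

end Data

variable {R : Type} [AddCommGroup R] [Module ℂ R]

/-- `(R, α)` with the given data is a Hom-Lie conformal superalgebra.
All polynomial identities in `λ, μ` are stated by evaluating at arbitrary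
complex numbers (which is equivalent, `ℂ` being infinite). -/
structure IsHLCS (S : Data R) : Prop where
  internal : DirectSum.IsInternal S.G
  der_even : ∀ i, ∀ a ∈ S.G i, S.der a ∈ S.G i
  alpha_even : ∀ i, ∀ a ∈ S.G i, S.alpha a ∈ S.G i
  alpha_der : ∀ a, S.alpha (S.der a) = S.der (S.alpha a)
  br_grade : ∀ i j, ∀ a ∈ S.G i, ∀ b ∈ S.G j, ∀ n, S.br a b n ∈ S.G (i + j)
  conf_left : ∀ (l : ℂ) (a b : R), S.lb l (S.der a) b = -l • S.lb l a b
  conf_right : ∀ (l : ℂ) (a b : R), S.lb l a (S.der b) = S.der (S.lb l a b) + l • S.lb l a b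
  skew : ∀ i j, ∀ a ∈ S.G i, ∀ b ∈ S.G j, ∀ l : ℂ,
    S.lb l a b = (-sg i j) • S.lbOp l b a
  jacobi : ∀ i j, ∀ a ∈ S.G i, ∀ b ∈ S.G j, ∀ (c : R) (l m : ℂ),
    S.lb l (S.alpha a) (S.lb m b c) =
      S.lb (l + m) (S.lb l a b) (S.alpha c) + sg i j • S.lb m (S.alpha b) (S.lb l a c)

end HLCS
namespace HLCS

variable {R : Type} [AddCommGroup R] [Module ℂ R]

/-- A homogeneous conformal linear map of parity `d` on `R`, encoded as the family of
its evaluations `F l : R → R` (`l : ℂ`): it is `ℂ`-linear, polynomial in `l`, and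
satisfies `F_λ(∂a) = (∂ + λ) F_λ(a)`. -/
structure IsConfMap (S : Data R) (d : ZMod 2) (F : ℂ → R → R) : Prop where
  map_add : ∀ (l : ℂ) (a b : R), F l (a + b) = F l a + F l b
  map_smul : ∀ (l c : ℂ) (a : R), F l (c • a) = c • F l a
  poly : ∀ a : R, ∃ p : ℕ →₀ R, ∀ l : ℂ, F l a = pev l p
  conf : ∀ (l : ℂ) (a : R), F l (S.der a) = S.der (F l a) + l • F l a
  grade : ∀ i, ∀ a ∈ S.G i, ∀ l : ℂ, F l a ∈ S.G (i + d)

/-- Membership in `Ω`: a homogeneous conformal linear map commuting with `α`. -/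
def InOmega (S : Data R) (d : ZMod 2) (F : ℂ → R → R) : Prop :=
  IsConfMap S d F ∧ ∀ (l : ℂ) (a : R), F l (S.alpha a) = S.alpha (F l a)

/-- An `α^k`-derivation of parity `d`. -/
def IsDer (S : Data R) (k : ℕ) (d : ZMod 2) (F : ℂ → R → R) : Prop :=
  InOmega S d F ∧ ∀ i, ∀ a ∈ S.G i, ∀ (b : R) (l m : ℂ),
    F l (S.lb m a b) =
      S.lb (l + m) (F l a) ((S.alpha ^ k) b) +
        ((-1 : ℂ) ^ ((i * d).val)) • S.lb m ((S.alpha ^ k) a) (F l b)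

/-- The commutator `[D_λ D']_μ (a) = D_λ(D'_{μ-λ}(a)) - (-1)^{|D||D'|} D'_{μ-λ}(D_λ(a))`,
with `e = (-1)^{|D||D'|}`; first argument `l` is `λ`, second `m` is `μ`. -/
def brkt (e : ℂ) (F G : ℂ → R → R) : ℂ → ℂ → R → R :=
  fun l m a => F l (G (m - l) a) - e • G (m - l) (F l a)

/-- The twist `α'(D) = D ∘ α`. -/
def tw (S : Data R) (F : ℂ → R → R) : ℂ → R → R := fun l a => F l (S.alpha a)

/-- A generalized `α^k`-derivation of parity `d`. -/
def IsGDer (S : Data R) (k : ℕ) (d : ZMod 2) (F : ℂ → R → R) : Prop :=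
  InOmega S d F ∧ ∃ F' F'' : ℂ → R → R, InOmega S d F' ∧ InOmega S d F'' ∧
    ∀ i, ∀ a ∈ S.G i, ∀ (b : R) (l m : ℂ),
      S.lb (l + m) (F m a) ((S.alpha ^ k) b) +
        ((-1 : ℂ) ^ ((d * i).val)) • S.lb l ((S.alpha ^ k) a) (F' m b) = F'' m (S.lb l a b)

/-- An `α^k`-quasiderivation of parity `d`. -/
def IsQDer (S : Data R) (k : ℕ) (d : ZMod 2) (F : ℂ → R → R) : Prop :=
  InOmega S d F ∧ ∃ F' : ℂ → R → R, InOmega S d F' ∧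
    ∀ i, ∀ a ∈ S.G i, ∀ (b : R) (l m : ℂ),
      S.lb (l + m) (F m a) ((S.alpha ^ k) b) +
        ((-1 : ℂ) ^ ((d * i).val)) • S.lb l ((S.alpha ^ k) a) (F m b) = F' m (S.lb l a b)

/-- An `α^k`-centroid of parity `d`. -/
def IsCent (S : Data R) (k : ℕ) (d : ZMod 2) (F : ℂ → R → R) : Prop :=
  InOmega S d F ∧ ∀ i, ∀ a ∈ S.G i, ∀ (b : R) (l m : ℂ),
    S.lb (l + m) (F m a) ((S.alpha ^ k) b) =
      ((-1 : ℂ) ^ ((d * i).val)) • S.lb l ((S.alpha ^ k) a) (F m b) ∧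
    S.lb (l + m) (F m a) ((S.alpha ^ k) b) = F m (S.lb l a b)

/-- An `α^k`-quasicentroid of parity `d`. -/
def IsQC (S : Data R) (k : ℕ) (d : ZMod 2) (F : ℂ → R → R) : Prop :=
  InOmega S d F ∧ ∀ i, ∀ a ∈ S.G i, ∀ (b : R) (l m : ℂ),
    S.lb (l + m) (F m a) ((S.alpha ^ k) b) =
      ((-1 : ℂ) ^ ((d * i).val)) • S.lb l ((S.alpha ^ k) a) (F m b)

/-- An `α^k`-central derivation of parity `d`. -/
def IsZDer (S : Data R) (k : ℕ) (d : ZMod 2) (F : ℂ → R → R) : Prop :=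
  InOmega S d F ∧ ∀ (a b : R) (l m : ℂ),
    S.lb (l + m) (F m a) ((S.alpha ^ k) b) = 0 ∧ F m (S.lb l a b) = 0

/-- Membership in the center `Z(R)`. -/
def IsCentral (S : Data R) (x : R) : Prop := ∀ (l : ℂ) (y : R), S.lb l x y = 0

end HLCS
namespace HLCS

variable {R : Type} [AddCommGroup R] [Module ℂ R]


lemma pev_zero (l : ℂ) : pev l (0 : ℕ →₀ R) = 0 := Finsupp.sum_zero_index

lemma pev_add (l : ℂ) (p q : ℕ →₀ R) : pev l (p + q) = pev l p + pev l q :=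
  Finsupp.sum_add_index' (fun _ => smul_zero _) (fun _ r s => smul_add _ r s)

lemma pev_single (l : ℂ) (n : ℕ) (r : R) : pev l (Finsupp.single n r) = l ^ n • r :=
  Finsupp.sum_single_index (smul_zero _)

lemma pev_smul (l c : ℂ) (p : ℕ →₀ R) : pev l (c • p) = c • pev l p := by
  unfold pev
  rw [Finsupp.sum_smul_index' (fun _ => smul_zero _), Finsupp.smul_sum]
  exact Finsupp.sum_congr fun n _ => smul_comm _ _ _

lemma pev_sub (l : ℂ) (p q : ℕ →₀ R) : pev l (p - q) = pev l p - pev l q := by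
  rw [sub_eq_add_neg, pev_add, ← neg_one_smul ℂ q, pev_smul, neg_one_smul, ← sub_eq_add_neg]

lemma pev_map (T : R →ₗ[ℂ] R) (l : ℂ) (p : ℕ →₀ R) :
    T (pev l p) = pev l (p.mapRange T (map_zero T)) := by
  unfold pev
  rw [map_finsuppSum, Finsupp.sum_mapRange_index (fun _ => smul_zero _)]
  simp

/-- polynomial functions -/
def IsPoly (f : ℂ → R) : Prop := ∃ p : ℕ →₀ R, ∀ m : ℂ, f m = pev m p

lemma IsPoly.congr {f g : ℂ → R} (hf : IsPoly f) (h : ∀ m, f m = g m) : IsPoly g := by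
  obtain ⟨p, hp⟩ := hf; exact ⟨p, fun m => (h m).symm.trans (hp m)⟩

lemma isPoly_const (r : R) : IsPoly (fun _ : ℂ => r) :=
  ⟨Finsupp.single 0 r, fun m => by simp [pev_single]⟩

lemma IsPoly.add {f g : ℂ → R} (hf : IsPoly f) (hg : IsPoly g) :
    IsPoly (fun m => f m + g m) := by
  obtain ⟨p, hp⟩ := hf; obtain ⟨q, hq⟩ := hg
  exact ⟨p + q, fun m => by show f m + g m = _; rw [pev_add, hp, hq]⟩

lemma IsPoly.smul {f : ℂ → R} (hf : IsPoly f) (c : ℂ) : IsPoly (fun m => c • f m) := by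
  obtain ⟨p, hp⟩ := hf
  exact ⟨c • p, fun m => by show c • f m = _; rw [pev_smul, hp]⟩

lemma IsPoly.sub {f g : ℂ → R} (hf : IsPoly f) (hg : IsPoly g) :
    IsPoly (fun m => f m - g m) := by
  have := hf.add (hg.smul (-1))
  exact this.congr (fun m => by simp [sub_eq_add_neg])

lemma IsPoly.mulX {f : ℂ → R} (hf : IsPoly f) : IsPoly (fun m => m • f m) := by
  obtain ⟨p, hp⟩ := hf
  refine ⟨Finsupp.embDomain ⟨Nat.succ, Nat.succ_injective⟩ p, fun m => ?_⟩
  show m • f m = _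
  rw [hp]
  unfold pev
  rw [Finsupp.sum_embDomain, Finsupp.smul_sum]
  refine Finsupp.sum_congr fun n _ => ?_
  show m • m ^ n • p n = m ^ (Nat.succ n) • p n
  rw [pow_succ, mul_comm, mul_smul]

lemma IsPoly.map {f : ℂ → R} (hf : IsPoly f) (T : R →ₗ[ℂ] R) :
    IsPoly (fun m => T (f m)) := by
  obtain ⟨p, hp⟩ := hf
  exact ⟨p.mapRange T (map_zero T), fun m => by show T (f m) = _; rw [hp, pev_map]⟩

lemma isPoly_shift (c : ℂ) (p : ℕ →₀ R) : IsPoly (fun m => pev (m + c) p) := by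
  induction p using Finsupp.induction with
  | zero => exact (isPoly_const 0).congr (fun m => (pev_zero _).symm)
  | single_add n r q hn hr ih =>
      have h1 : IsPoly (fun m : ℂ => (m + c) ^ n • r) := by
        clear hn hr
        induction n with
        | zero => exact (isPoly_const r).congr (fun m => by simp)
        | succ n ihn =>
            have := (ihn.mulX).add (ihn.smul c)
            exact this.congr (fun m => by
              show m • _ + c • _ = _
              rw [smul_smul, smul_smul, ← add_smul, pow_succ]
              congr 1
              ring)
      exact (h1.add ih).congr (fun m => by rw [pev_add, pev_single])

/-- sign lemma -/
lemma sgn_add (x y : ZMod 2) : (-1 : ℂ) ^ ((x + y).val) = (-1) ^ x.val * (-1) ^ y.val := by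
  rw [ZMod.val_add, ← pow_add]
  exact (neg_one_pow_eq_pow_mod_two _).symm

section DataLemmas

variable (S : Data R)

lemma lb_sub_left (l : ℂ) (a b c : R) : S.lb l (a - b) c = S.lb l a c - S.lb l b c := by
  unfold Data.lb; rw [map_sub, LinearMap.sub_apply, pev_sub]

lemma lb_smul_left (l c : ℂ) (a b : R) : S.lb l (c • a) b = c • S.lb l a b := by
  unfold Data.lb; rw [map_smul, LinearMap.smul_apply, pev_smul]

lemma lb_sub_right (l : ℂ) (a b c : R) : S.lb l a (b - c) = S.lb l a b - S.lb l a c := by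
  unfold Data.lb; rw [map_sub, pev_sub]

lemma lb_smul_right (l c : ℂ) (a b : R) : S.lb l a (c • b) = c • S.lb l a b := by
  unfold Data.lb; rw [map_smul, pev_smul]

lemma pow_apply_add (f : Module.End ℂ R) (k s : ℕ) (x : R) :
    (f ^ k) ((f ^ s) x) = (f ^ (k + s)) x := by
  rw [pow_add, Module.End.mul_apply]

lemma alpha_pow_mem (hS : IsHLCS S) (n : ℕ) (i : ZMod 2) {a : R} (ha : a ∈ S.G i) :
    (S.alpha ^ n) a ∈ S.G i := by
  induction n with
  | zero => simpa using ha
  | succ n ih =>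
      rw [pow_succ', Module.End.mul_apply]
      exact hS.alpha_even i _ ih

lemma comm_alpha_pow {F : ℂ → R → R}
    (h : ∀ (l : ℂ) (a : R), F l (S.alpha a) = S.alpha (F l a)) (n : ℕ) (l : ℂ) (a : R) :
    F l ((S.alpha ^ n) a) = (S.alpha ^ n) (F l a) := by
  induction n with
  | zero => simp
  | succ n ih =>
      rw [pow_succ', Module.End.mul_apply, h, ih, ← Module.End.mul_apply, ← pow_succ']

end DataLemmas

/-- bundled linear map from a conformal map -/
def IsConfMap.lin {S : Data R} {d : ZMod 2} {F : ℂ → R → R} (h : IsConfMap S d F)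
    (l : ℂ) : R →ₗ[ℂ] R :=
  { toFun := F l, map_add' := h.map_add l, map_smul' := h.map_smul l }

lemma IsConfMap.map_sub {S : Data R} {d : ZMod 2} {F : ℂ → R → R} (h : IsConfMap S d F)
    (l : ℂ) (a b : R) : F l (a - b) = F l a - F l b :=
  _root_.map_sub (h.lin l) a b


/-- For a multiplicative Hom-Lie conformal superalgebra `(R, α)`,
the space `Der(R) = ⊕_k Der_{α^k}(R)` with `(∂D)_λ = -λ D_λ`, the commutator
`[D_λ D']_μ = D_λ D'_{μ-λ} - (-1)^{|D||D'|} D'_{μ-λ} D_λ` and the twist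
`α'(D) = D ∘ α` is a Hom-Lie conformal superalgebra: it is closed under the twist
and the bracket, and the bracket satisfies conformal sesquilinearity,
skew-symmetry and the Hom-Jacobi identity (all identities stated on evaluations). -/
theorem der_homLie (S : Data R) (hS : IsHLCS S) (hmult : S.Mult)
    (k s u : ℕ) (d d' d'' : ZMod 2) (F G H : ℂ → R → R)
    (hF : IsDer S k d F) (hG : IsDer S s d' G) (hH : IsDer S u d'' H) :
    -- the twist `α'` maps `Der_{α^k}` to `Der_{α^{k+1}}`
    IsDer S (k + 1) d (tw S F) ∧
    -- closure of the bracket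
    (∀ l : ℂ, IsDer S (k + s) (d + d') (brkt ((-1 : ℂ) ^ ((d * d').val)) F G l)) ∧
    -- conformal sesquilinearity `[(∂D)_λ D'] = -λ [D_λ D']`
    (∀ (l m : ℂ) (a : R),
      brkt ((-1 : ℂ) ^ ((d * d').val)) (fun v b => -v • F v b) G l m a =
        -l • brkt ((-1 : ℂ) ^ ((d * d').val)) F G l m a) ∧
    -- conformal sesquilinearity `[D_λ (∂D')] = (∂ + λ)[D_λ D']`
    (∀ (l m : ℂ) (a : R),
      brkt ((-1 : ℂ) ^ ((d * d').val)) F (fun v b => -v • G v b) l m a =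
        (-m + l) • brkt ((-1 : ℂ) ^ ((d * d').val)) F G l m a) ∧
    -- skew-symmetry `[D_λ D'] = -(-1)^{|D||D'|} [D'_{-λ-∂} D]`
    (∀ (l m : ℂ) (a : R),
      brkt ((-1 : ℂ) ^ ((d * d').val)) F G l m a =
        (-((-1 : ℂ) ^ ((d * d').val))) •
          brkt ((-1 : ℂ) ^ ((d * d').val)) G F (m - l) m a) ∧
    -- the Hom-Jacobi identity
    (∀ (l m t : ℂ) (a : R),
      brkt ((-1 : ℂ) ^ ((d * (d' + d'')).val)) (tw S F)
          (brkt ((-1 : ℂ) ^ ((d' * d'').val)) G H m) l t a =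
        brkt ((-1 : ℂ) ^ (((d + d') * d'').val))
            (brkt ((-1 : ℂ) ^ ((d * d').val)) F G l) (tw S H) (l + m) t a +
          ((-1 : ℂ) ^ ((d * d').val)) •
            brkt ((-1 : ℂ) ^ ((d' * (d + d'')).val)) (tw S G)
              (brkt ((-1 : ℂ) ^ ((d * d'').val)) F H l) m t a) := by
  obtain ⟨⟨hFc, hFa⟩, hFd⟩ := hF
  obtain ⟨⟨hGc, hGa⟩, hGd⟩ := hG
  obtain ⟨⟨hHc, hHa⟩, hHd⟩ := hH
  refine ⟨?_, ?_, ?_, ?_, ?_, ?_⟩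
  · -- twist
    refine ⟨⟨⟨?_, ?_, ?_, ?_, ?_⟩, ?_⟩, ?_⟩
    · intro l a b
      show F l (S.alpha (a + b)) = _
      rw [map_add, hFc.map_add]; rfl
    · intro l c a
      show F l (S.alpha (c • a)) = _
      rw [map_smul, hFc.map_smul]; rfl
    · intro a
      exact hFc.poly (S.alpha a)
    · intro l a
      show F l (S.alpha (S.der a)) = _
      rw [hS.alpha_der, hFc.conf]; rfl
    · intro i a ha l
      exact hFc.grade i _ (hS.alpha_even i a ha) l
    · intro l a
      exact hFa l (S.alpha a)
    · intro i a ha b l m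
      show F l (S.alpha (S.lb m a b)) = _
      rw [hmult, hFd i _ (hS.alpha_even i a ha) (S.alpha b) l m]
      simp only [tw, pow_succ, Module.End.mul_apply]
  · -- closure of the bracket
    intro l
    have hpoly : ∀ a : R, IsPoly (fun m => brkt ((-1 : ℂ) ^ ((d * d').val)) F G l m a) := by
      intro a
      obtain ⟨q, hq⟩ := hGc.poly a
      obtain ⟨q', hq'⟩ := hGc.poly (F l a)
      have h1 : IsPoly (fun m => F l (G (m - l) a)) := by
        refine ((isPoly_shift (-l) q).map (hFc.lin l)).congr (fun m => ?_)
        show F l (pev (m + -l) q) = _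
        rw [hq, sub_eq_add_neg]
      have h2 : IsPoly (fun m => G (m - l) (F l a)) := by
        refine (isPoly_shift (-l) q').congr (fun m => ?_)
        rw [hq', sub_eq_add_neg]
      exact h1.sub (h2.smul _)
    refine ⟨⟨⟨?_, ?_, fun a => hpoly a, ?_, ?_⟩, ?_⟩, ?_⟩
    · intro m a b
      simp only [brkt, hGc.map_add, hFc.map_add, smul_add]
      abel
    · intro m c a
      simp only [brkt, hGc.map_smul, hFc.map_smul]
      module
    · intro m a
      simp only [brkt, hGc.conf, hFc.conf, hFc.map_add, hFc.map_smul, hGc.map_add,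
        hGc.map_smul, map_sub, map_smul, smul_add, smul_sub]
      module
    · intro i a ha m
      have h1 := hFc.grade (i + d') _ (hGc.grade i a ha (m - l)) l
      have h2 := hGc.grade (i + d) _ (hFc.grade i a ha l) (m - l)
      rw [show i + d' + d = i + (d + d') by ring] at h1
      rw [show i + d + d' = i + (d + d') by ring] at h2
      exact Submodule.sub_mem _ h1 (Submodule.smul_mem _ _ h2)
    · intro m a
      simp only [brkt, hGa, hFa, map_sub, map_smul]
    · intro i a ha b v m
      have hga : G (v - l) a ∈ S.G (i + d') := hGc.grade i a ha (v - l)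
      have hfa : F l a ∈ S.G (i + d) := hFc.grade i a ha l
      have hsa : (S.alpha ^ s) a ∈ S.G i := alpha_pow_mem S hS s i ha
      have hka : (S.alpha ^ k) a ∈ S.G i := alpha_pow_mem S hS k i ha
      simp only [brkt]
      rw [hGd i a ha b (v - l) m, hFd i a ha b l m,
        hFc.map_add, hFc.map_smul, hGc.map_add, hGc.map_smul,
        hFd (i + d') _ hga ((S.alpha ^ s) b) l (v - l + m),
        hFd i _ hsa (G (v - l) b) l m,
        hGd (i + d) _ hfa ((S.alpha ^ k) b) (v - l) (l + m),
        hGd i _ hka (F l b) (v - l) m,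
        lb_sub_left, lb_smul_left, lb_sub_right, lb_smul_right]
      simp only [comm_alpha_pow S hFa, ← comm_alpha_pow S hGa, pow_apply_add]
      rw [show s + k = k + s from Nat.add_comm s k,
        show l + (v - l + m) = v + m from by ring,
        show v - l + (l + m) = v + m from by ring,
        add_mul i d' d, add_mul i d d', mul_add i d d', mul_comm d' d]
      simp only [sgn_add]
      rcases Nat.even_or_odd ((i * d).val) with h1 | h1 <;>
      rcases Nat.even_or_odd ((i * d').val) with h2 | h2 <;>
      rcases Nat.even_or_odd ((d * d').val) with h3 | h3 <;>
        simp only [h1.neg_one_pow, h2.neg_one_pow, h3.neg_one_pow] <;> module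
  · -- sesquilinearity left
    intro l m a
    simp only [brkt, hGc.map_smul]
    module
  · -- sesquilinearity right
    intro l m a
    simp only [brkt, hFc.map_smul]
    module
  · -- skew-symmetry
    intro l m a
    simp only [brkt]
    rw [show m - (m - l) = l from by ring]
    rcases Nat.even_or_odd ((d * d').val) with h | h <;>
      simp only [h.neg_one_pow] <;> module
  · -- Hom-Jacobi
    intro l m t a
    simp only [brkt, tw, hFc.map_sub, hGc.map_sub, hHc.map_sub, hFc.map_smul, hGc.map_smul,
      hHc.map_smul, map_sub, map_smul, hFa, hGa, hHa]
    rw [show t - m - l = t - l - m from by ring, show l + m - l = m from by ring,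
      show t - (l + m) = t - l - m from by ring]
    rw [mul_add d d' d'', add_mul d d' d'', mul_add d' d d'', mul_comm d' d]
    simp only [sgn_add]
    rcases Nat.even_or_odd ((d * d').val) with h1 | h1 <;>
    rcases Nat.even_or_odd ((d * d'').val) with h2 | h2 <;>
    rcases Nat.even_or_odd ((d' * d'').val) with h3 | h3 <;>
      simp only [h1.neg_one_pow, h2.neg_one_pow, h3.neg_one_pow] <;> module

end HLCS
end
end

section
/- Let (R, α) be a multiplicative Hom-Lie conformal superalgebra with α surjective, and let Z(R) be its center. Then [C(R)_λ QC(R)] ⊆ Chom(R, Z(R))[λ]: for any homogeneous D₁ ∈ C_{α^k}(R) and D₂ ∈ QC_{α^s}(R), the commutator [D₁_μ D₂] takes values in Z(R)[μ]. Moreover, if Z(R) = 0, then [C(R)_λ QC(R)] = 0. -/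
noncomputable section

namespace HLCS

variable {R : Type} [AddCommGroup R] [Module ℂ R]

lemma pev_eq_lsum {M : Type} [AddCommGroup M] [Module ℂ M] (l : ℂ) :
    pev (M := M) l = ⇑(Finsupp.lsum ℂ fun n => (l ^ n) • (LinearMap.id : M →ₗ[ℂ] M)) := rfl

lemma neg_one_pow_val_add (x y : ZMod 2) :
    (-1 : ℂ) ^ ((x + y).val) = (-1 : ℂ) ^ x.val * (-1 : ℂ) ^ y.val := by
  have hx : x = 0 ∨ x = 1 := by revert x; decide
  have hy : y = 0 ∨ y = 1 := by revert y; decide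
  rcases hx with h | h <;> rcases hy with h' | h' <;> subst h <;> subst h' <;>
    simp [show ((1 : ZMod 2) + 1) = 0 from rfl, show ((1 : ZMod 2)).val = 1 from rfl]

lemma lb_sub_smul (S : Data R) (ν : ℂ) (x z y : R) (e : ℂ) :
    S.lb ν (x - e • z) y = S.lb ν x y - e • S.lb ν z y := by
  unfold Data.lb
  rw [map_sub, map_smul, LinearMap.sub_apply, LinearMap.smul_apply, pev_eq_lsum,
    map_sub, map_smul]

lemma lb_add_left (S : Data R) (ν : ℂ) (x z y : R) :
    S.lb ν (x + z) y = S.lb ν x y + S.lb ν z y := by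
  unfold Data.lb
  rw [map_add, LinearMap.add_apply, pev_eq_lsum, map_add]

lemma lb_zero_left (S : Data R) (ν : ℂ) (y : R) : S.lb ν 0 y = 0 := by
  unfold Data.lb
  rw [map_zero, LinearMap.zero_apply, pev_eq_lsum, map_zero]

lemma pow_comm_of_comm (α : Module.End ℂ R) (f : R → R)
    (h : ∀ x, f (α x) = α (f x)) : ∀ (n : ℕ) (x : R), f ((α ^ n) x) = (α ^ n) (f x) := by
  intro n
  induction n with
  | zero => intro x; simp
  | succ n ih =>
      intro x
      rw [pow_succ, Module.End.mul_apply, ih (α x), h, Module.End.mul_apply]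

lemma pow_mem_grade (S : Data R) (hS : IsHLCS S) (n : ℕ) (i : ZMod 2) :
    ∀ a ∈ S.G i, (S.alpha ^ n) a ∈ S.G i := by
  induction n with
  | zero => intro a ha; simpa using ha
  | succ n ih =>
      intro a ha
      rw [pow_succ, Module.End.mul_apply]
      exact ih _ (hS.alpha_even i a ha)

lemma zmod2_sign (d d' i : ZMod 2) : d * d' + d' * (i + d) = d' * i := by
  revert d d' i; decide

lemma pow_surj (α : Module.End ℂ R) (h : Function.Surjective α) (n : ℕ) :
    Function.Surjective (α ^ n) := by
  induction n with
  | zero => intro y; exact ⟨y, by simp⟩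
  | succ n ih =>
      intro y
      obtain ⟨z, hz⟩ := h y
      obtain ⟨w, hw⟩ := ih z
      exact ⟨w, by rw [pow_succ', Module.End.mul_apply, hw, hz]⟩

/-- Let `(R, α)` be a multiplicative Hom-Lie conformal superalgebra
with `α` surjective and center `Z(R)`.  Then `[C(R)_λ QC(R)] ⊆ Chom(R, Z(R))[λ]`:
the commutator of a homogeneous `α^k`-centroid with a homogeneous
`α^s`-quasicentroid takes values in `Z(R)`.  Moreover, if `Z(R) = 0` then
`[C(R)_λ QC(R)] = 0`. -/
theorem cent_bracket_qc_central (S : Data R) (hS : IsHLCS S) (hmult : S.Mult)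
    (hsurj : Function.Surjective S.alpha)
    (k s : ℕ) (d d' : ZMod 2) (F G : ℂ → R → R)
    (hF : IsCent S k d F) (hG : IsQC S s d' G) :
    (∀ (l m : ℂ) (a : R),
      IsCentral S (brkt ((-1 : ℂ) ^ ((d * d').val)) F G l m a)) ∧
    ((∀ x : R, IsCentral S x → x = 0) →
      ∀ (l m : ℂ) (a : R), brkt ((-1 : ℂ) ^ ((d * d').val)) F G l m a = 0) := by
  set e : ℂ := (-1 : ℂ) ^ ((d * d').val) with he
  have key : ∀ (l m : ℂ) (a : R), IsCentral S (brkt e F G l m a) := by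
    intro l m a ν y
    obtain ⟨c, hc⟩ := pow_surj S.alpha hsurj (k + s) y
    set u : ℂ := m - l with hu
    -- the main computation for homogeneous `a`
    have main : ∀ i : ZMod 2, ∀ x ∈ S.G i, S.lb ν (brkt e F G l m x) y = 0 := by
      intro i x hx
      have hys : y = (S.alpha ^ k) ((S.alpha ^ s) c) := by
        rw [← hc, pow_add, Module.End.mul_apply]
      have hyk : y = (S.alpha ^ s) ((S.alpha ^ k) c) := by
        rw [← hc, show k + s = s + k from Nat.add_comm k s, pow_add, Module.End.mul_apply]
      have h1 : G u x ∈ S.G (i + d') := hG.1.1.grade i x hx u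
      have h2 : F l x ∈ S.G (i + d) := hF.1.1.grade i x hx l
      have has : (S.alpha ^ s) x ∈ S.G i := pow_mem_grade S hS s i x hx
      set X : R := S.lb (ν - m) ((S.alpha ^ s) x) (G u c) with hX
      -- Term 1
      have T1 : S.lb ν (F l (G u x)) y = ((-1 : ℂ) ^ ((d' * i).val)) • F l X := by
        have h := (hF.2 (i + d') (G u x) h1 ((S.alpha ^ s) c) (ν - l) l).2
        rw [show (ν - l) + l = ν from by ring] at h
        have hq := hG.2 i x hx c (ν - m) u
        rw [show (ν - m) + u = ν - l from by rw [hu]; ring] at hq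
        rw [hys, h, hq, hF.1.1.map_smul]
      -- Term 2
      have T2 : S.lb ν (G u (F l x)) y = ((-1 : ℂ) ^ ((d' * (i + d)).val)) • F l X := by
        have hq := hG.2 (i + d) (F l x) h2 ((S.alpha ^ k) c) (ν - m + l) u
        rw [show (ν - m + l) + u = ν from by rw [hu]; ring] at hq
        have hcs : (S.alpha ^ s) (F l x) = F l ((S.alpha ^ s) x) :=
          (pow_comm_of_comm S.alpha (F l) (fun z => hF.1.2 l z) s x).symm
        have hck : G u ((S.alpha ^ k) c) = (S.alpha ^ k) (G u c) :=
          pow_comm_of_comm S.alpha (G u) (fun z => hG.1.2 u z) k c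
        rw [hcs, hck] at hq
        have h := (hF.2 i ((S.alpha ^ s) x) has (G u c) (ν - m) l).2
        rw [hyk, hq, h]
      have hsign : e * (-1 : ℂ) ^ ((d' * (i + d)).val) = (-1 : ℂ) ^ ((d' * i).val) := by
        rw [he, ← neg_one_pow_val_add]
        congr 1
        rw [zmod2_sign d d' i]
      have hbr : brkt e F G l m x = F l (G u x) - e • G u (F l x) := rfl
      rw [hbr, lb_sub_smul, T1, T2, smul_smul, hsign, sub_self]
    -- extend to all of `R` by linearity
    have hmem : a ∈ ⨆ i, S.G i := by
      rw [hS.internal.submodule_iSup_eq_top]; exact Submodule.mem_top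
    refine Submodule.iSup_induction (motive := fun x => S.lb ν (brkt e F G l m x) y = 0)
      S.G hmem main ?_ ?_
    · have hbr : brkt e F G l m 0 = 0 := by
        have hF0 : F l (0 : R) = 0 := by
          have := hF.1.1.map_smul l 0 (0 : R); simpa using this
        have hG0 : G (m - l) (0 : R) = 0 := by
          have := hG.1.1.map_smul (m - l) 0 (0 : R); simpa using this
        show F l (G (m - l) 0) - e • G (m - l) (F l 0) = 0
        simp [hF0, hG0]
      show S.lb ν (brkt e F G l m 0) y = 0
      rw [hbr, lb_zero_left]
    · intro x z hxe hze
      have hbr : brkt e F G l m (x + z) = brkt e F G l m x + brkt e F G l m z := by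
        show F l (G (m - l) (x + z)) - e • G (m - l) (F l (x + z)) =
          (F l (G (m - l) x) - e • G (m - l) (F l x)) +
            (F l (G (m - l) z) - e • G (m - l) (F l z))
        rw [hG.1.1.map_add, hF.1.1.map_add, hF.1.1.map_add, hG.1.1.map_add, smul_add]
        abel
      show S.lb ν (brkt e F G l m (x + z)) y = 0
      rw [hbr, lb_add_left, hxe, hze, add_zero]
  exact ⟨key, fun hz l m a => hz _ (key l m a)⟩

end HLCS
end
end
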